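/- Define α_j = −iβ (μω/2ℏ)^{2j} / (2j+1)! for j ≥ 0, with β real. Then the series T_C(u,v) = Σ_{j≥0} α_j u^{2j} v^{2j+1} satisfies the harmonic oscillator canonical time kernel equation −(2ℏ²/μ)∂²T_C/∂u∂v + (μω²/2)uv·T_C = 0, with boundary values T_C(u,0) = 0 and T_C(0,v) = −iβ v. -/

import Mathlib

theorem reciprocal_hamiltonian_kernel (μ ω ℏ β : ℝ) (hμ : 0 < μ) (hω : 0 < ω)
    (hℏ : 0 < ℏ) (hβ : 0 < β)
    (T : ℝ → ℝ → ℂ)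
    (hT : ∀ u v : ℝ, T u v = ∑' j : ℕ,
      (-Complex.I * β * ((μ * ω / (2 * ℏ)) ^ (2 * j) : ℝ) / ((Nat.factorial (2 * j + 1) : ℝ) : ℂ)) *
        (u : ℂ) ^ (2 * j) * (v : ℂ) ^ (2 * j + 1)) :
    (∀ u v : ℝ,
      -(2 * (ℏ : ℂ) ^ 2 / μ) * deriv (fun u' : ℝ => deriv (fun v' : ℝ => T u' v') v) u
        + (μ * (ω : ℂ) ^ 2 / 2) * u * v * T u v = 0) ∧
    (∀ u : ℝ, T u 0 = 0) ∧
    (∀ v : ℝ, T 0 v = -Complex.I * β * v) := by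
  set a : ℂ := ((μ * ω / (2 * ℏ) : ℝ) : ℂ) with ha
  have hμ' : (μ : ℂ) ≠ 0 := Complex.ofReal_ne_zero.mpr hμ.ne'
  have hω' : (ω : ℂ) ≠ 0 := Complex.ofReal_ne_zero.mpr hω.ne'
  have hℏ' : (ℏ : ℂ) ≠ 0 := Complex.ofReal_ne_zero.mpr hℏ.ne'
  have ha0 : a ≠ 0 := by
    rw [ha]
    push_cast
    field_simp
    exact div_ne_zero (mul_ne_zero hμ' hω') (mul_ne_zero two_ne_zero hℏ')
  -- key closed-form identity
  have key : ∀ u v : ℝ, a * u * T u v = -Complex.I * β * Complex.sinh (a * u * v) := by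
    intro u v
    rw [hT, Complex.sinh_eq_tsum, ← tsum_mul_left (a := -Complex.I * β), ← tsum_mul_left]
    congr 1
    funext j
    push_cast [ha]
    ring
  -- boundary value at v = 0
  have hb0 : ∀ u : ℝ, T u 0 = 0 := by
    intro u
    rw [hT]
    simp
  -- boundary value at u = 0
  have hb1 : ∀ v : ℝ, T 0 v = -Complex.I * β * v := by
    intro v
    rw [hT, tsum_eq_single 0]
    · simp
    · intro j hj
      have : (0 : ℂ) ^ (2 * j) = 0 := by
        apply zero_pow
        omega
      simp [this]
  -- derivative in v
  have hderivv : ∀ (u v : ℝ),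
      HasDerivAt (fun v' : ℝ => T u v') (-Complex.I * β * Complex.cosh (a * u * v)) v := by
    intro u v
    rcases eq_or_ne u 0 with rfl | hu
    · have hfun : (fun v' : ℝ => T 0 v') = fun v' : ℝ => -Complex.I * β * (v' : ℂ) := by
        funext v'
        exact hb1 v'
      rw [hfun]
      have h1 : HasDerivAt (fun v' : ℝ => ((v' : ℂ))) 1 v := by
        exact ((hasDerivAt_id v).ofReal_comp).congr_deriv Complex.ofReal_one
      have := h1.const_mul (-Complex.I * β)
      simpa using this
    · have hu' : (u : ℂ) ≠ 0 := Complex.ofReal_ne_zero.mpr hu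
      have hfun : (fun v' : ℝ => T u v')
          = fun v' : ℝ => (-Complex.I * β / (a * u)) * Complex.sinh (a * u * v') := by
        funext v'
        have := key u v'
        field_simp
        linear_combination this
      rw [hfun]
      have h1 : HasDerivAt (fun v' : ℝ => (a * u * (v' : ℂ))) (a * u) v := by
        have : HasDerivAt (fun v' : ℝ => ((v' : ℂ))) 1 v := by
          exact ((hasDerivAt_id v).ofReal_comp).congr_deriv Complex.ofReal_one
        simpa using this.const_mul (a * u)
      have h2 : HasDerivAt (fun v' : ℝ => Complex.sinh (a * u * (v' : ℂ)))
          (Complex.cosh (a * u * v) * (a * u)) v := by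
        have := (Complex.hasDerivAt_sinh (a * u * v)).comp v h1
        exact this
      have := h2.const_mul (-Complex.I * β / (a * u))
      refine this.congr_deriv ?_
      rw [div_mul_eq_mul_div, div_eq_iff (mul_ne_zero ha0 hu')]
      ring
  -- the inner derivative function
  have hG : ∀ v : ℝ, (fun u' : ℝ => deriv (fun v' : ℝ => T u' v') v)
      = fun u' : ℝ => -Complex.I * β * Complex.cosh (a * u' * v) := by
    intro v
    funext u'
    exact (hderivv u' v).deriv
  refine ⟨?_, hb0, hb1⟩
  intro u v
  rw [hG v]
  -- derivative in u
  have h1 : HasDerivAt (fun u' : ℝ => (a * (u' : ℂ) * v)) (a * v) u := by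
    have : HasDerivAt (fun u' : ℝ => ((u' : ℂ))) 1 u := by
      exact ((hasDerivAt_id u).ofReal_comp).congr_deriv Complex.ofReal_one
    simpa using (this.const_mul a).mul_const (v : ℂ)
  have h2 : HasDerivAt (fun u' : ℝ => Complex.cosh (a * (u' : ℂ) * v))
      (Complex.sinh (a * u * v) * (a * v)) u := by
    have := (Complex.hasDerivAt_cosh (a * u * v)).comp u h1
    exact this
  have h3 := (h2.const_mul (-Complex.I * β)).deriv
  rw [h3]
  have h4 : (μ * (ω : ℂ) ^ 2 / 2) * u * v * T u v
      = (μ * (ω : ℂ) ^ 2 / (2 * a)) * v * (-Complex.I * β * Complex.sinh (a * u * v)) := by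
    rw [← key u v]
    field_simp
  rw [h4, ha]
  push_cast
  field_simp
  ring
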